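/- Let Ω_n = π^(n/2)/Γ(n/2 + 1) be the volume of the unit ball in ℝⁿ. Then Ω_n^(1/(n log n)) is strictly decreasing for n ≥ 2 and converges to e^(-1/2) as n → ∞. -/

import Mathlib

open Real Set

/-- The volume of the unit ball in ℝⁿ. -/
noncomputable def unitBallVolume (n : ℕ) : ℝ := π ^ ((n : ℝ) / 2) / Real.Gamma ((n : ℝ) / 2 + 1)

open Filter Topology

set_option maxHeartbeats 1000000



-- helper: 1 - 1/x ≤ log x  (exists as Real.one_sub_inv_le_log_of_pos)

lemma log_Gamma_add_one' {x : ℝ} (hx : 0 < x) :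
    Real.log (Real.Gamma (x + 1)) = Real.log x + Real.log (Real.Gamma x) := by
  rw [Real.Gamma_add_one (ne_of_gt hx),
    Real.log_mul (ne_of_gt hx) (ne_of_gt (Real.Gamma_pos_of_pos hx))]

lemma lgamma_half_upper {x : ℝ} (hx : 0 < x) :
    Real.log (Real.Gamma (x + 1/2)) - Real.log (Real.Gamma x) ≤ Real.log x / 2 := by
  have h := Real.convexOn_log_Gamma.slope_mono_adjacent (x := x) (y := x + 1/2) (z := x + 1)
    (mem_Ioi.mpr hx) (mem_Ioi.mpr (by linarith)) (by linarith) (by linarith)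
  simp only [Function.comp] at h
  have e1 : Real.log (Real.Gamma (x + 1)) = Real.log x + Real.log (Real.Gamma x) :=
    log_Gamma_add_one' hx
  have d1 : x + 1/2 - x = 1/2 := by ring
  have d2 : x + 1 - (x + 1/2) = 1/2 := by ring
  rw [d1, d2, e1, div_le_div_iff₀ (by norm_num) (by norm_num)] at h
  linarith

lemma lgamma_half_lower {x : ℝ} (hx : 1/2 < x) :
    Real.log (x - 1/2) / 2 ≤ Real.log (Real.Gamma (x + 1/2)) - Real.log (Real.Gamma x) := by
  have hx0 : (0:ℝ) < x := by linarith
  have hy : (0:ℝ) < x - 1/2 := by linarith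
  have h := Real.convexOn_log_Gamma.slope_mono_adjacent (x := x - 1/2) (y := x) (z := x + 1/2)
    (mem_Ioi.mpr hy) (mem_Ioi.mpr (by linarith)) (by linarith) (by linarith)
  simp only [Function.comp] at h
  have e1 : Real.log (Real.Gamma (x + 1/2)) =
      Real.log (x - 1/2) + Real.log (Real.Gamma (x - 1/2)) := by
    have := log_Gamma_add_one' hy
    rw [show x - 1/2 + 1 = x + 1/2 by ring] at this
    exact this
  have d1 : x - (x - 1/2) = 1/2 := by ring
  have d2 : x + 1/2 - x = 1/2 := by ring
  rw [d1, d2, div_le_div_iff₀ (by norm_num) (by norm_num)] at h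
  nlinarith [h, e1]


lemma log_factorial_le (k : ℕ) (hk : 1 ≤ k) :
    Real.log (Nat.factorial k : ℝ) ≤ 1 + Real.log k / 2 + k * Real.log k - k := by
  obtain ⟨m, rfl⟩ : ∃ m, k = m + 1 := ⟨k - 1, by omega⟩
  have h1 : Real.log (Stirling.stirlingSeq (m + 1)) ≤ Real.log (Stirling.stirlingSeq 1) :=
    Stirling.log_stirlingSeq'_antitone (Nat.zero_le m)
  have hf := Stirling.log_stirlingSeq_formula (m + 1)
  have h2 : Real.log (Stirling.stirlingSeq 1) = 1 - Real.log 2 / 2 := by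
    rw [Stirling.stirlingSeq_one, Real.log_div (by positivity) (by positivity),
      Real.log_exp, Real.log_sqrt (by norm_num)]
  have hkpos : (0:ℝ) < (m + 1 : ℕ) := by positivity
  have h3 : Real.log ((m + 1 : ℕ) / Real.exp 1) = Real.log (m + 1 : ℕ) - 1 := by
    rw [Real.log_div (ne_of_gt hkpos) (Real.exp_ne_zero 1), Real.log_exp]
  have h4 : Real.log (2 * (m + 1 : ℕ)) = Real.log 2 + Real.log (m + 1 : ℕ) := by
    rw [Real.log_mul (by norm_num) (ne_of_gt hkpos)]
  rw [hf, h2, h3, h4] at h1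
  nlinarith [h1]

lemma sqrt_pi_le_stirlingSeq (m : ℕ) : Real.sqrt π ≤ Stirling.stirlingSeq (m + 1) := by
  have ht : Tendsto (Stirling.stirlingSeq ∘ Nat.succ) atTop (𝓝 (Real.sqrt π)) :=
    Stirling.tendsto_stirlingSeq_sqrt_pi.comp (tendsto_add_atTop_nat 1)
  exact Stirling.stirlingSeq'_antitone.le_of_tendsto ht m

lemma log_factorial_ge (k : ℕ) (hk : 1 ≤ k) :
    (k:ℝ) * Real.log k - k ≤ Real.log (Nat.factorial k : ℝ) := by
  obtain ⟨m, rfl⟩ : ∃ m, k = m + 1 := ⟨k - 1, by omega⟩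
  have h1 : (1:ℝ) ≤ Stirling.stirlingSeq (m + 1) := by
    refine le_trans ?_ (sqrt_pi_le_stirlingSeq m)
    rw [show (1:ℝ) = Real.sqrt 1 by simp]
    exact Real.sqrt_le_sqrt (by linarith [Real.pi_gt_three])
  have h1' : (0:ℝ) ≤ Real.log (Stirling.stirlingSeq (m + 1)) := Real.log_nonneg h1
  have hf := Stirling.log_stirlingSeq_formula (m + 1)
  have hkpos : (0:ℝ) < (m + 1 : ℕ) := by positivity
  have h3 : Real.log ((m + 1 : ℕ) / Real.exp 1) = Real.log (m + 1 : ℕ) - 1 := by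
    rw [Real.log_div (ne_of_gt hkpos) (Real.exp_ne_zero 1), Real.log_exp]
  have h4 : (0:ℝ) ≤ Real.log (2 * (m + 1 : ℕ)) := by
    apply Real.log_nonneg
    have : (1:ℝ) ≤ (m + 1 : ℕ) := by exact_mod_cast Nat.one_le_iff_ne_zero.mpr (Nat.succ_ne_zero m)
    nlinarith
  rw [hf, h3] at h1'
  nlinarith [h1']



noncomputable def phiB (n : ℕ) : ℝ :=
  (n:ℝ)/2 * Real.log π + (n:ℝ)/2 * Real.log n - Real.log (Real.Gamma ((n:ℝ)/2 + 1))

lemma unitBallVolume_pos (n : ℕ) : 0 < unitBallVolume n :=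
  div_pos (Real.rpow_pos_of_pos Real.pi_pos _) (Real.Gamma_pos_of_pos (by positivity))

lemma log_unitBallVolume (n : ℕ) :
    Real.log (unitBallVolume n) = phiB n - (n:ℝ)/2 * Real.log n := by
  unfold unitBallVolume phiB
  rw [Real.log_div (ne_of_gt (Real.rpow_pos_of_pos Real.pi_pos _))
    (ne_of_gt (Real.Gamma_pos_of_pos (by positivity))), Real.log_rpow Real.pi_pos]
  ring

lemma log_pi_ge : (1.1395:ℝ) ≤ Real.log π := by
  have h1 : (1.075:ℝ)^2 * Real.exp 1 ≤ π := by
    nlinarith [Real.exp_one_lt_d9, Real.pi_gt_d6, Real.exp_pos 1]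
  have h2 : Real.log ((1.075:ℝ)^2 * Real.exp 1) = 2 * Real.log 1.075 + 1 := by
    rw [Real.log_mul (by positivity) (Real.exp_ne_zero 1), Real.log_exp, Real.log_pow]
    push_cast; ring
  have h3 : (0.06976:ℝ) ≤ Real.log 1.075 := by
    have := Real.one_sub_inv_le_log_of_pos (show (0:ℝ) < 1.075 by norm_num)
    norm_num at this ⊢
    linarith
  have h4 : Real.log ((1.075:ℝ)^2 * Real.exp 1) ≤ Real.log π :=
    Real.log_le_log (by positivity) h1
  rw [h2] at h4; linarith

lemma log_pi_le : Real.log π ≤ (2.15:ℝ) := by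
  have := Real.log_le_sub_one_of_pos Real.pi_pos
  linarith [Real.pi_lt_d2]

lemma c0_ge : (1.4163:ℝ) ≤ (1 + Real.log 2 + Real.log π)/2 := by
  have := Real.log_two_gt_d9; have := log_pi_ge; linarith

lemma exp_quartic {x : ℝ} (hx : 0 ≤ x) : (1 + x/4)^4 ≤ Real.exp x := by
  have h1 : (1 + x/4) ≤ Real.exp (x/4) := by linarith [Real.add_one_le_exp (x/4)]
  calc (1 + x/4)^4 ≤ Real.exp (x/4) ^ 4 := by
        apply pow_le_pow_left₀ (by linarith) h1
    _ = Real.exp x := by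
        rw [← Real.exp_nat_mul]; congr 1; push_cast; ring
lemma poly1 {x : ℝ} (hx : 0 ≤ x) : (0.6535 + x/2)*(x+1) ≤ 1.4163*(1+x/4)^4 := by
  nlinarith [pow_nonneg hx 2, pow_nonneg hx 3, pow_nonneg hx 4, sq_nonneg x]

lemma poly2 {x : ℝ} (hx : 1.02 ≤ x) : (1.1535 + x/2)*(x+1) ≤ 1.4163*(1+x/4)^4 := by
  nlinarith [sq_nonneg (x - 1.02), mul_nonneg (mul_nonneg (sub_nonneg.2 hx) (sub_nonneg.2 hx)) (sub_nonneg.2 hx), sq_nonneg x, mul_nonneg (sub_nonneg.2 hx) (sq_nonneg x)]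



lemma closeAux {c₀ nr x φ B : ℝ} (hc : c₀*nr - φ ≤ B) (hB : 0 < B)
    (hkey : B*(x+1) ≤ c₀*nr) (hx : 0 < x) : 0 < φ ∧ c₀*(nr*x) ≤ φ*(x+1) := by
  constructor
  · nlinarith [mul_pos hB hx]
  · nlinarith [mul_le_mul_of_nonneg_right hc (by linarith : (0:ℝ) ≤ x+1)]

lemma phiB_key {n : ℕ} (hn : 2 ≤ n) :
    0 < phiB n ∧
    ((1 + Real.log 2 + Real.log π)/2) * ((n:ℝ) * Real.log n) ≤ phiB n * (Real.log n + 1) := by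
  set c₀ : ℝ := (1 + Real.log 2 + Real.log π)/2 with hc₀
  set x : ℝ := Real.log n with hxdef
  have hn1 : (1:ℝ) < n := by exact_mod_cast hn
  have hx0 : 0 < x := Real.log_pos hn1
  have hq : (1+x/4)^4 ≤ (n:ℝ) := by
    have h := exp_quartic hx0.le
    rwa [hxdef, Real.exp_log (by positivity)] at h
  have hc0pos : (0:ℝ) < c₀ := lt_of_lt_of_le (by norm_num) c0_ge
  have hqpos : (0:ℝ) ≤ (1+x/4)^4 := by positivity
  have hl2 : (0.6931:ℝ) < Real.log 2 := by
    have := Real.log_two_gt_d9; linarith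
  rcases Nat.even_or_odd n with ⟨k, hk⟩ | ⟨k, hk⟩
  · -- even case : n = 2k
    have hk1 : 1 ≤ k := by omega
    have hkR : (1:ℝ) ≤ k := by exact_mod_cast hk1
    have hnr : (n:ℝ) = 2*k := by rw [hk]; push_cast; ring
    have hhalf : (n:ℝ)/2 = (k:ℝ) := by rw [hnr]; ring
    have hΓ : Real.log (Real.Gamma ((n:ℝ)/2 + 1)) = Real.log (Nat.factorial k : ℝ) := by
      rw [hhalf, Real.Gamma_nat_eq_factorial]
    have hfac := log_factorial_le k hk1
    have hxeq : x = Real.log 2 + Real.log k := by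
      rw [hxdef, hnr, Real.log_mul (by norm_num) (by positivity)]
    have hphi : phiB n = (k:ℝ)*Real.log π + (k:ℝ)*x - Real.log (Nat.factorial k : ℝ) := by
      rw [phiB, hΓ, hhalf, ← hxdef]
    have hkx : (k:ℝ)*x = (k:ℝ)*Real.log 2 + (k:ℝ)*Real.log k := by rw [hxeq]; ring
    have hc : c₀*(n:ℝ) - phiB n ≤ 1 + Real.log k/2 := by
      rw [hphi, hc₀, hnr]; nlinarith [hfac, hkx]
    have hB : (0:ℝ) < 1 + Real.log k/2 := by
      have : (0:ℝ) ≤ Real.log k := Real.log_nonneg hkR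
      linarith
    have hkey : (1 + Real.log k/2)*(x+1) ≤ c₀*(n:ℝ) := by
      have h1 : 1 + Real.log k/2 ≤ 0.6535 + x/2 := by
        rw [hxeq]; linarith
      calc (1 + Real.log k/2)*(x+1) ≤ (0.6535 + x/2)*(x+1) := by nlinarith
        _ ≤ 1.4163*(1+x/4)^4 := poly1 hx0.le
        _ ≤ c₀*(1+x/4)^4 := by nlinarith [c0_ge]
        _ ≤ c₀*(n:ℝ) := by nlinarith [hq]
    exact closeAux hc hB hkey hx0
  · -- odd case : n = 2k+1
    have hk1 : 1 ≤ k := by omega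
    have hkR : (1:ℝ) ≤ k := by exact_mod_cast hk1
    have hn3 : (3:ℝ) ≤ n := by
      have : 3 ≤ n := by omega
      exact_mod_cast this
    have hnr : (n:ℝ) = 2*k+1 := by rw [hk]; push_cast; ring
    have hhalf : (n:ℝ)/2 + 1 = ((k:ℝ)+1) + 1/2 := by rw [hnr]; ring
    have hup := lgamma_half_upper (x := (k:ℝ)+1) (by positivity)
    have hΓ : Real.log (Real.Gamma ((k:ℝ)+1)) = Real.log (Nat.factorial k : ℝ) := by
      rw [Real.Gamma_nat_eq_factorial]
    have hfac := log_factorial_le k hk1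
    have hL : Real.log (Real.Gamma ((n:ℝ)/2 + 1)) ≤
        1 + Real.log k/2 + (k:ℝ)*Real.log k - k + Real.log ((k:ℝ)+1)/2 := by
      rw [hhalf]; rw [hΓ] at hup; linarith
    -- x = log(2k+1) ≥ log 2 + log k + 1/(2k+1)
    have hratio : (1:ℝ) - (2*(k:ℝ))/(2*(k:ℝ)+1) ≤ Real.log ((2*(k:ℝ)+1)/(2*(k:ℝ))) := by
      have h := Real.one_sub_inv_le_log_of_pos (show (0:ℝ) < (2*(k:ℝ)+1)/(2*(k:ℝ)) by positivity)
      have e : ((2*(k:ℝ)+1)/(2*(k:ℝ)))⁻¹ = (2*(k:ℝ))/(2*(k:ℝ)+1) := by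
        rw [inv_div]
      rwa [e] at h
    have hxge : Real.log 2 + Real.log k + 1/(2*(k:ℝ)+1) ≤ x := by
      have e : (n:ℝ) = (2*(k:ℝ)) * ((2*(k:ℝ)+1)/(2*(k:ℝ))) := by
        rw [hnr]; field_simp
      have e2 : x = Real.log 2 + Real.log k + Real.log ((2*(k:ℝ)+1)/(2*(k:ℝ))) := by
        rw [hxdef, e, Real.log_mul (by positivity) (by positivity),
          Real.log_mul (by norm_num) (by positivity)]
      have e3 : (1:ℝ) - (2*(k:ℝ))/(2*(k:ℝ)+1) = 1/(2*(k:ℝ)+1) := by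
        field_simp; ring
      rw [e2]; rw [e3] at hratio; linarith
    have hkxge : (k:ℝ)*Real.log 2 + (k:ℝ)*Real.log k + 1/3 ≤ (k:ℝ)*x := by
      have h1 := mul_le_mul_of_nonneg_left hxge (by positivity : (0:ℝ) ≤ (k:ℝ))
      have h2 : (1:ℝ)/3 ≤ (k:ℝ)*(1/(2*(k:ℝ)+1)) := by
        rw [mul_one_div, le_div_iff₀ (by positivity)]; linarith
      have h1' : (k:ℝ)*Real.log 2 + (k:ℝ)*Real.log k + (k:ℝ)*(1/(2*(k:ℝ)+1)) ≤ (k:ℝ)*x := by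
        nlinarith [h1]
      linarith [h1', h2]
    have hk1le : Real.log ((k:ℝ)+1) ≤ x - Real.log 2 + 1/3 := by
      have e2 : ((k:ℝ)+1) = ((n:ℝ)+1)/2 := by rw [hnr]; ring
      have e3 : ((n:ℝ)+1) = (n:ℝ) * (((n:ℝ)+1)/(n:ℝ)) := by field_simp
      have h4 : Real.log (((n:ℝ)+1)/(n:ℝ)) ≤ 1/3 := by
        have h5 := Real.log_le_sub_one_of_pos (show (0:ℝ) < ((n:ℝ)+1)/(n:ℝ) by positivity)
        have h6 : ((n:ℝ)+1)/(n:ℝ) - 1 = 1/(n:ℝ) := by field_simp; ring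
        have h7 : 1/(n:ℝ) ≤ 1/3 := by
          apply div_le_div_of_nonneg_left (by norm_num) (by norm_num) hn3
        linarith
      have e4 : Real.log ((k:ℝ)+1) = Real.log ((n:ℝ)+1) - Real.log 2 := by
        rw [e2, Real.log_div (by positivity) (by norm_num)]
      have e5 : Real.log ((n:ℝ)+1) = x + Real.log (((n:ℝ)+1)/(n:ℝ)) := by
        rw [hxdef, e3, Real.log_mul (by positivity) (by positivity)]
        rw [← e3]
      rw [e4, e5]; linarith
    have hlogkle : Real.log (k:ℝ) ≤ Real.log ((k:ℝ)+1) :=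
      Real.log_le_log (by positivity) (by linarith)
    have hphi : phiB n = ((k:ℝ)+1/2)*Real.log π + ((k:ℝ)+1/2)*x
        - Real.log (Real.Gamma ((n:ℝ)/2 + 1)) := by
      rw [phiB, ← hxdef, hnr]; ring_nf
    have hc : c₀*(n:ℝ) - phiB n ≤ 3/2 - Real.log 2/2 + x/2 := by
      rw [hnr] at hL
      rw [hphi, hc₀, hnr]
      nlinarith [hL, hkxge, hk1le, hlogkle]
    have hB : (0:ℝ) < 3/2 - Real.log 2/2 + x/2 := by
      have : Real.log 2 ≤ 1 := by linarith [Real.log_two_lt_d9]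
      linarith
    have hx102 : (1.02:ℝ) ≤ x := by
      have h3 : Real.log 3 ≤ x := by
        rw [hxdef]; exact Real.log_le_log (by norm_num) hn3
      have e : Real.log 3 = Real.log 2 + Real.log (3/2) := by
        rw [← Real.log_mul (by norm_num) (by norm_num)]; norm_num
      have h32 : (1:ℝ)/3 ≤ Real.log (3/2) := by
        have := Real.one_sub_inv_le_log_of_pos (show (0:ℝ) < 3/2 by norm_num)
        norm_num at this ⊢; linarith
      linarith
    have hkey : (3/2 - Real.log 2/2 + x/2)*(x+1) ≤ c₀*(n:ℝ) := by
      have h1 : 3/2 - Real.log 2/2 + x/2 ≤ 1.1535 + x/2 := by linarith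
      calc (3/2 - Real.log 2/2 + x/2)*(x+1) ≤ (1.1535 + x/2)*(x+1) := by nlinarith
        _ ≤ 1.4163*(1+x/4)^4 := poly2 hx102
        _ ≤ c₀*(1+x/4)^4 := by nlinarith [c0_ge]
        _ ≤ c₀*(n:ℝ) := by nlinarith [hq]
    exact closeAux hc hB hkey hx0



lemma phiB_succ_le {n : ℕ} (hn : 2 ≤ n) :
    phiB (n+1) ≤ phiB n + (1 + Real.log 2 + Real.log π)/2 := by
  have hn0 : (0:ℝ) < n := by positivity
  have hn2 : (2:ℝ) ≤ n := by exact_mod_cast hn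
  have hlow := lgamma_half_lower (x := (n:ℝ)/2 + 1) (by linarith)
  have e0 : (n:ℝ)/2 + 1 - 1/2 = ((n:ℝ)+1)/2 := by ring
  have e1 : (n:ℝ)/2 + 1 + 1/2 = ((n:ℝ)+1)/2 + 1 := by ring
  rw [e0, e1] at hlow
  have e2 : Real.log (((n:ℝ)+1)/2) = Real.log ((n:ℝ)+1) - Real.log 2 :=
    Real.log_div (by positivity) (by norm_num)
  have hstep : Real.log ((n:ℝ)+1) - Real.log n ≤ 1/n := by
    have e3 : ((n:ℝ)+1) = (n:ℝ) * (((n:ℝ)+1)/(n:ℝ)) := by field_simp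
    have e4 : Real.log ((n:ℝ)+1) = Real.log n + Real.log (((n:ℝ)+1)/(n:ℝ)) := by
      rw [e3, Real.log_mul (by positivity) (by positivity), ← e3]
    have h5 := Real.log_le_sub_one_of_pos (show (0:ℝ) < ((n:ℝ)+1)/(n:ℝ) by positivity)
    have h6 : ((n:ℝ)+1)/(n:ℝ) - 1 = 1/(n:ℝ) := by field_simp; ring
    rw [e4]; linarith
  have hmul : (n:ℝ)/2 * (Real.log ((n:ℝ)+1) - Real.log n) ≤ 1/2 := by
    have h1 := mul_le_mul_of_nonneg_left hstep (by positivity : (0:ℝ) ≤ (n:ℝ)/2)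
    have h2 : (n:ℝ)/2 * (1/(n:ℝ)) = 1/2 := by field_simp
    linarith
  have hcast : ((n+1:ℕ):ℝ) = (n:ℝ)+1 := by push_cast; ring
  rw [phiB, phiB, hcast]
  rw [e2] at hlow
  nlinarith [hlow, hmul]

lemma step_denom {n : ℕ} (hn : 2 ≤ n) :
    Real.log n + 1 < ((n:ℝ)+1) * Real.log ((n:ℝ)+1) - (n:ℝ) * Real.log n := by
  have hn0 : (0:ℝ) < n := by positivity
  have hgt : 1/((n:ℝ)+1) < Real.log ((n:ℝ)+1) - Real.log n := by
    have h := Real.log_lt_sub_one_of_pos (show (0:ℝ) < (n:ℝ)/((n:ℝ)+1) by positivity)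
      (by intro h; field_simp at h; linarith)
    have e : Real.log ((n:ℝ)/((n:ℝ)+1)) = Real.log n - Real.log ((n:ℝ)+1) :=
      Real.log_div (by positivity) (by positivity)
    rw [e] at h
    have e2 : (n:ℝ)/((n:ℝ)+1) - 1 = -(1/((n:ℝ)+1)) := by field_simp; ring
    rw [e2] at h; linarith
  have h2 := mul_lt_mul_of_pos_left hgt (show (0:ℝ) < (n:ℝ)+1 by positivity)
  have e3 : ((n:ℝ)+1) * (1/((n:ℝ)+1)) = 1 := by field_simp
  rw [e3] at h2
  nlinarith [h2]

lemma phiB_le3 {n : ℕ} (hn : 2 ≤ n) : phiB n ≤ 3*n := by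
  have hl2 : Real.log 2 ≤ 0.6932 := by linarith [Real.log_two_lt_d9]
  rcases Nat.even_or_odd n with ⟨k, hk⟩ | ⟨k, hk⟩
  · have hk1 : 1 ≤ k := by omega
    have hkR : (1:ℝ) ≤ k := by exact_mod_cast hk1
    have hnr : (n:ℝ) = 2*k := by rw [hk]; push_cast; ring
    have hhalf : (n:ℝ)/2 = (k:ℝ) := by rw [hnr]; ring
    have hΓ : Real.log (Real.Gamma ((n:ℝ)/2 + 1)) = Real.log (Nat.factorial k : ℝ) := by
      rw [hhalf, Real.Gamma_nat_eq_factorial]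
    have hfac := log_factorial_ge k hk1
    have hxeq : Real.log (n:ℝ) = Real.log 2 + Real.log k := by
      rw [hnr, Real.log_mul (by norm_num) (by positivity)]
    rw [phiB, hΓ, hhalf, hxeq, hnr]
    nlinarith [hfac, log_pi_le, hkR]
  · have hk1 : 1 ≤ k := by omega
    have hkR : (1:ℝ) ≤ k := by exact_mod_cast hk1
    have hnr : (n:ℝ) = 2*k+1 := by rw [hk]; push_cast; ring
    have hhalf : (n:ℝ)/2 + 1 = ((k:ℝ)+1) + 1/2 := by rw [hnr]; ring
    have hlow := lgamma_half_lower (x := (k:ℝ)+1) (by linarith)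
    have e0 : (k:ℝ)+1-1/2 = (k:ℝ)+1/2 := by ring
    rw [e0, Real.Gamma_nat_eq_factorial] at hlow
    have hpos : (0:ℝ) ≤ Real.log ((k:ℝ)+1/2) := Real.log_nonneg (by linarith)
    have hfac := log_factorial_ge k hk1
    have hxle : Real.log (n:ℝ) ≤ Real.log 3 + Real.log k := by
      rw [← Real.log_mul (by norm_num) (by positivity)]
      apply Real.log_le_log (by positivity)
      rw [hnr]; linarith
    have hprod : ((k:ℝ)+1/2) * Real.log (n:ℝ) ≤ ((k:ℝ)+1/2)*(Real.log 3 + Real.log k) :=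
      mul_le_mul_of_nonneg_left hxle (by positivity)
    have hlog3 : Real.log 3 ≤ 2 := by linarith [Real.log_le_sub_one_of_pos (show (0:ℝ)<3 by norm_num)]
    have hlogk : Real.log (k:ℝ) ≤ (k:ℝ) := by
      linarith [Real.log_le_sub_one_of_pos (show (0:ℝ) < (k:ℝ) by positivity)]
    rw [phiB, hhalf]
    have hnn : (n:ℝ)/2 = (k:ℝ)+1/2 := by rw [hnr]; ring
    rw [hnn, hnr]
    rw [hnr] at hprod
    nlinarith [hlow, hfac, hprod, log_pi_le, hlog3, hlogk, hkR, hpos]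

lemma main_step {n : ℕ} (hn : 2 ≤ n) :
    Real.log (unitBallVolume (n+1)) / (((n+1:ℕ):ℝ) * Real.log ((n+1:ℕ):ℝ)) <
    Real.log (unitBallVolume n) / ((n:ℝ) * Real.log n) := by
  have hcast : ((n+1:ℕ):ℝ) = (n:ℝ)+1 := by push_cast; ring
  rw [hcast]
  have hn1 : (1:ℝ) < n := by exact_mod_cast hn
  have hn0 : (0:ℝ) < n := by linarith
  have hL0 : 0 < Real.log n := Real.log_pos hn1
  have hL1 : 0 < Real.log ((n:ℝ)+1) := Real.log_pos (by linarith)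
  have hdn : (0:ℝ) < (n:ℝ) * Real.log n := by positivity
  have hdn1 : (0:ℝ) < ((n:ℝ)+1) * Real.log ((n:ℝ)+1) := by positivity
  rw [div_lt_div_iff₀ hdn1 hdn]
  have e1 := log_unitBallVolume n
  have e2 := log_unitBallVolume (n+1)
  rw [hcast] at e2
  have hA := phiB_succ_le hn
  obtain ⟨h0, hkk⟩ := phiB_key hn
  have hC := step_denom hn
  have hsuff : phiB (n+1) * ((n:ℝ) * Real.log n) <
      phiB n * (((n:ℝ)+1) * Real.log ((n:ℝ)+1)) := by
    nlinarith [mul_le_mul_of_nonneg_right hA hdn.le, hkk,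
      mul_lt_mul_of_pos_left hC h0, hdn, h0]
  rw [e1, e2]
  nlinarith [hsuff]



theorem unitBallVolume_rpow_strictAnti_tendsto :
    StrictAntiOn (fun n : ℕ => unitBallVolume n ^ (1 / ((n : ℝ) * Real.log n)))
      {n : ℕ | 2 ≤ n} ∧
    Filter.Tendsto (fun n : ℕ => unitBallVolume n ^ (1 / ((n : ℝ) * Real.log n)))
      Filter.atTop (nhds (Real.exp (-1 / 2))) := by
  set F : ℕ → ℝ := fun n : ℕ => unitBallVolume n ^ (1 / ((n : ℝ) * Real.log n)) with hF
  have hFexp : ∀ n : ℕ, F n =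
      Real.exp (Real.log (unitBallVolume n) / ((n:ℝ) * Real.log n)) := by
    intro n
    have e : F n = unitBallVolume n ^ (1 / ((n : ℝ) * Real.log n)) := rfl
    rw [e, Real.rpow_def_of_pos (unitBallVolume_pos n), mul_one_div]
  have hstep : ∀ n : ℕ, 2 ≤ n → F (n+1) < F n := by
    intro n hn
    rw [hFexp, hFexp]
    exact Real.exp_lt_exp.mpr (main_step hn)
  constructor
  · intro a ha b hb hab
    simp only [mem_setOf_eq] at ha hb
    have key : ∀ d : ℕ, F (a + d + 1) < F a := by
      intro d
      induction d with
      | zero => simpa using hstep a ha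
      | succ d ih =>
        have h1 : F (a + d + 1 + 1) < F (a + d + 1) := hstep (a + d + 1) (by omega)
        have e : a + (d+1) + 1 = a + d + 1 + 1 := by omega
        rw [e]
        exact h1.trans ih
    have e : b = a + (b - a - 1) + 1 := by omega
    rw [hF] at key ⊢
    calc (fun n : ℕ => unitBallVolume n ^ (1 / ((n : ℝ) * Real.log n))) b
        = (fun n : ℕ => unitBallVolume n ^ (1 / ((n : ℝ) * Real.log n))) (a + (b-a-1) + 1) := by
          rw [← e]
      _ < _ := key (b - a - 1)
  · have hlogtop : Tendsto (fun n : ℕ => Real.log n) atTop atTop :=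
      Real.tendsto_log_atTop.comp tendsto_natCast_atTop_atTop
    have hub : Tendsto (fun n : ℕ => 3 / Real.log n) atTop (𝓝 0) :=
      tendsto_const_nhds.div_atTop hlogtop
    have h0 : Tendsto (fun n : ℕ => phiB n / ((n:ℝ) * Real.log n)) atTop (𝓝 0) := by
      apply tendsto_of_tendsto_of_tendsto_of_le_of_le' tendsto_const_nhds hub
      · filter_upwards [eventually_ge_atTop 2] with n hn
        have hn1 : (1:ℝ) ≤ n := by exact_mod_cast Nat.one_le_of_lt hn
        exact div_nonneg (phiB_key hn).1.le
          (mul_nonneg (by positivity) (Real.log_nonneg hn1))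
      · filter_upwards [eventually_ge_atTop 2] with n hn
        have hn1 : (1:ℝ) < n := by exact_mod_cast hn
        have hd : (0:ℝ) < (n:ℝ) * Real.log n := by
          exact mul_pos (by positivity) (Real.log_pos hn1)
        have h1 : phiB n / ((n:ℝ) * Real.log n) ≤ (3*(n:ℝ)) / ((n:ℝ) * Real.log n) :=
          (div_le_div_iff_of_pos_right hd).mpr (phiB_le3 hn)
        have h2 : (3*(n:ℝ)) / ((n:ℝ) * Real.log n) = 3 / Real.log n := by
          rw [div_eq_div_iff hd.ne' (Real.log_pos hn1).ne']
          ring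
        linarith [h1, h2.le, h2.ge]
    have h2 : Tendsto (fun n : ℕ =>
        Real.log (unitBallVolume n) / ((n:ℝ) * Real.log n)) atTop (𝓝 (-1/2 : ℝ)) := by
      have h3 := h0.sub_const (1/2 : ℝ)
      have h4 : (0:ℝ) - 1/2 = -1/2 := by norm_num
      rw [h4] at h3
      apply h3.congr'
      filter_upwards [eventually_ge_atTop 2] with n hn
      have hn1 : (1:ℝ) < n := by exact_mod_cast hn
      have hL : Real.log n ≠ 0 := ne_of_gt (Real.log_pos hn1)
      have hnn : (n:ℝ) ≠ 0 := by positivity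
      have hd : (0:ℝ) < (n:ℝ) * Real.log n := mul_pos (by positivity) (Real.log_pos hn1)
      rw [log_unitBallVolume, sub_div]
      congr 1
      rw [eq_div_iff hd.ne']
      ring
    have h5 := h2.rexp
    have h6 : ∀ n : ℕ, Real.exp (Real.log (unitBallVolume n) / ((n:ℝ) * Real.log n)) = F n :=
      fun n => (hFexp n).symm
    rw [hF] at h6
    have h7 : Real.exp (-1/2 : ℝ) = Real.exp (-1/2) := rfl
    exact h5.congr h6
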